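/- Let H be a finite-dimensional complex inner product space with D := dim H ≥ 1, and let (W_i)_{i∈I} be a finite family of linear subspaces of H such that for all i ≠ j and all unit vectors v ∈ W_i and w ∈ W_j one has |⟨v, w⟩| < 1/D. Then ∑_{i∈I} dim W_i ≤ D. -/

import Mathlib

lemma aux_almost_orthogonal_li
    {H : Type*} [NormedAddCommGroup H] [InnerProductSpace ℂ H]
    {D : ℕ} (hD : 1 ≤ D) (u : Fin (D + 1) → H)
    (hu : ∀ k, ‖u k‖ = 1)
    (hp : ∀ k l, k ≠ l → ‖(inner ℂ (u k) (u l) : ℂ)‖ < 1 / (D : ℝ)) :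
    LinearIndependent ℂ u := by
  rw [Fintype.linearIndependent_iff]
  intro g hg
  by_contra hne
  push_neg at hne
  obtain ⟨k1, hk1⟩ := hne
  obtain ⟨k0, -, hmax⟩ := Finset.exists_max_image Finset.univ (fun k => ‖g k‖)
    ⟨k1, Finset.mem_univ _⟩
  have hk0 : 0 < ‖g k0‖ := lt_of_lt_of_le (norm_pos_iff.mpr hk1) (hmax k1 (Finset.mem_univ _))
  have h0 : ∑ k, g k * (inner ℂ (u k0) (u k) : ℂ) = 0 := by
    have := congrArg (fun x => (inner ℂ (u k0) x : ℂ)) hg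
    simpa [inner_sum, inner_smul_right, mul_comm] using this
  have hself : (inner ℂ (u k0) (u k0) : ℂ) = 1 := by
    rw [inner_self_eq_norm_sq_to_K, hu k0]
    norm_num
  rw [← Finset.add_sum_erase Finset.univ _ (Finset.mem_univ k0), hself, mul_one] at h0
  have hsplit : g k0 = - ∑ k ∈ Finset.univ.erase k0, g k * (inner ℂ (u k0) (u k) : ℂ) :=
    eq_neg_of_add_eq_zero_left h0
  have hDpos : (0 : ℝ) < (D : ℝ) := by exact_mod_cast hD
  have hcard : (Finset.univ.erase k0).card = D := by
    rw [Finset.card_erase_of_mem (Finset.mem_univ k0)]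
    simp
  have hne' : (Finset.univ.erase k0).Nonempty := by
    rw [← Finset.card_pos, hcard]; omega
  have hlt : ‖g k0‖ < ‖g k0‖ := by
    calc ‖g k0‖ = ‖∑ k ∈ Finset.univ.erase k0, g k * (inner ℂ (u k0) (u k) : ℂ)‖ := by
          rw [hsplit, norm_neg]
      _ ≤ ∑ k ∈ Finset.univ.erase k0, ‖g k * (inner ℂ (u k0) (u k) : ℂ)‖ :=
          norm_sum_le _ _
      _ < ∑ _k ∈ Finset.univ.erase k0, ‖g k0‖ * (1 / (D : ℝ)) := by
          apply Finset.sum_lt_sum_of_nonempty hne'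
          intro k hk
          have hkne : k0 ≠ k := (Finset.ne_of_mem_erase hk).symm
          calc ‖g k * (inner ℂ (u k0) (u k) : ℂ)‖
              = ‖g k‖ * ‖(inner ℂ (u k0) (u k) : ℂ)‖ := norm_mul _ _
            _ ≤ ‖g k0‖ * ‖(inner ℂ (u k0) (u k) : ℂ)‖ :=
                mul_le_mul_of_nonneg_right (hmax k (Finset.mem_univ _)) (norm_nonneg _)
            _ < ‖g k0‖ * (1 / (D : ℝ)) :=
                mul_lt_mul_of_pos_left (hp k0 k hkne) hk0
      _ = ‖g k0‖ := by
          rw [Finset.sum_const, hcard, nsmul_eq_mul]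
          field_simp
  exact lt_irrefl _ hlt

theorem dimension_bound_for_subspace_family
    {H : Type*} [NormedAddCommGroup H] [InnerProductSpace ℂ H] [FiniteDimensional ℂ H]
    (hD : 1 ≤ Module.finrank ℂ H)
    {I : Type*} [Fintype I] (W : I → Submodule ℂ H)
    (h : ∀ i j, i ≠ j → ∀ v ∈ W i, ∀ w ∈ W j, ‖v‖ = 1 → ‖w‖ = 1 →
        ‖(inner ℂ v w : ℂ)‖ < 1 / (Module.finrank ℂ H : ℝ)) :
    ∑ i, Module.finrank ℂ (W i) ≤ Module.finrank ℂ H := by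
  set D := Module.finrank ℂ H with hDdef
  by_contra hlt
  push_neg at hlt
  -- the sigma type indexing all basis vectors
  set S := (Σ i : I, Fin (Module.finrank ℂ (W i))) with hS
  have hcard : Fintype.card S = ∑ i, Module.finrank ℂ (W i) := by
    simp [hS, Fintype.card_sigma]
  have hcard' : D + 1 ≤ Fintype.card S := by omega
  obtain ⟨f⟩ : Nonempty (Fin (D + 1) ↪ S) := by
    rw [Function.Embedding.nonempty_iff_card_le]
    simpa using hcard'
  let b := fun i => stdOrthonormalBasis ℂ (W i)
  let v : S → H := fun x => ((b x.1) x.2 : H)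
  have hunit : ∀ x, ‖v x‖ = 1 := by
    intro x
    have := (b x.1).orthonormal.1 x.2
    exact this
  have hpair : ∀ x y : S, x ≠ y → ‖(inner ℂ (v x) (v y) : ℂ)‖ < 1 / (D : ℝ) := by
    intro x y hxy
    by_cases hij : x.1 = y.1
    · -- same subspace: orthogonal
      obtain ⟨i, k⟩ := x
      obtain ⟨j, l⟩ := y
      subst hij
      have hkl : k ≠ l := by
        intro hkl; exact hxy (by rw [hkl])
      have : (inner ℂ ((b i) k) ((b i) l) : ℂ) = 0 := (b i).orthonormal.2 hkl
      have hz : (inner ℂ (v ⟨i, k⟩) (v ⟨i, l⟩) : ℂ) = 0 := by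
        simpa [v, Submodule.coe_inner] using this
      rw [hz, norm_zero]
      positivity
    · exact h x.1 y.1 hij _ (SetLike.coe_mem _) _ (SetLike.coe_mem _)
        (hunit x) (hunit y)
  have hli : LinearIndependent ℂ (v ∘ f) :=
    aux_almost_orthogonal_li hD (v ∘ f) (fun k => hunit (f k))
      (fun k l hkl => hpair (f k) (f l) (fun e => hkl (f.injective e)))
  have := hli.fintype_card_le_finrank
  rw [Fintype.card_fin] at this
  omega
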